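/- arXiv:2601.19511 — 3 statements merged into one kernel-verified Lean document; each statement's English description precedes it below -/
import Mathlib

section
/- Let 𝒬 ⊆ 𝔓_c(Ω) be nonempty and (f^Q)_{Q∈𝒬} a 𝒬-consistent family of functions on 𝒳 (each f^Q : 𝒳 → [-∞,∞] satisfies f^Q(X)=f^Q(Y) whenever j_Q(X)=j_Q(Y)). Then the function f(X) := sup_{Q∈𝒬} f^Q(X) is lower 𝒫-sensitive with reduction set 𝒬, i.e., each lower level set {X ∈ 𝒳 : f(X) ≤ r}, r ∈ ℝ, has reduction set 𝒬. -/
open MeasureTheory Filter Set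

variable {Ω : Type*} [MeasurableSpace Ω]

/-- Quasi-sure equality with respect to a family of measures. -/
def QSEq (𝔓 : Set (Measure Ω)) (x y : Ω → ℝ) : Prop := ∀ P ∈ 𝔓, x =ᵐ[P] y

def qsSetoid (𝔓 : Set (Measure Ω)) : Setoid (Ω → ℝ) where
  r := QSEq 𝔓
  iseqv := ⟨fun _ _ _ => EventuallyEq.refl _ _,
    fun h P hP => (h P hP).symm,
    fun h1 h2 P hP => (h1 P hP).trans (h2 P hP)⟩

/-- The robust space `L⁰_c`. -/
def L0c (𝔓 : Set (Measure Ω)) := Quotient (qsSetoid 𝔓)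

def aeSetoid (Q : Measure Ω) : Setoid (Ω → ℝ) where
  r x y := x =ᵐ[Q] y
  iseqv := ⟨fun _ => EventuallyEq.refl _ _, EventuallyEq.symm, EventuallyEq.trans⟩

/-- The space `L⁰_Q` for a single measure. -/
def L0 (Q : Measure Ω) := Quotient (aeSetoid Q)

/-- Probability measures dominated by the family `𝔓` (vanishing on `𝔓`-polar sets). -/
def Pc (𝔓 : Set (Measure Ω)) : Set (Measure Ω) :=
  {Q | IsProbabilityMeasure Q ∧ ∀ N : Set Ω, (∀ P ∈ 𝔓, P N = 0) → Q N = 0}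

abbrev PcM (𝔓 : Set (Measure Ω)) := {Q : Measure Ω // Q ∈ Pc 𝔓}

theorem QSEq.aeEq {𝔓 : Set (Measure Ω)} (Q : PcM 𝔓) {x y : Ω → ℝ}
    (h : QSEq 𝔓 x y) : x =ᵐ[Q.1] y :=
  ae_iff.2 (Q.2.2 _ fun P hP => ae_iff.1 (h P hP))

/-- The map `j_Q : L⁰_c → L⁰_Q`. -/
def jQ {𝔓 : Set (Measure Ω)} (Q : PcM 𝔓) : L0c 𝔓 → L0 Q.1 :=
  Quotient.lift (fun x => Quotient.mk (aeSetoid Q.1) x)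
    (fun _ _ h => Quotient.sound (h.aeEq Q))

/-- The `𝔓`-quasi-sure order on `L⁰_c`. -/
def qsLe {𝔓 : Set (Measure Ω)} : L0c 𝔓 → L0c 𝔓 → Prop :=
  Quotient.lift₂ (fun x y => ∀ P ∈ 𝔓, x ≤ᵐ[P] y)
    (fun _ _ _ _ ha hb => propext
      ⟨fun h P hP => ((ha P hP).symm.le.trans (h P hP)).trans (hb P hP).le,
       fun h P hP => ((ha P hP).le.trans (h P hP)).trans (hb P hP).symm.le⟩)

/-- The `Q`-a.s. order on `L⁰_c`, for `Q ∈ 𝔓_c(Ω)`. -/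
def qLe {𝔓 : Set (Measure Ω)} (Q : PcM 𝔓) : L0c 𝔓 → L0c 𝔓 → Prop :=
  Quotient.lift₂ (fun x y => x ≤ᵐ[Q.1] y)
    (fun _ _ _ _ ha hb => propext
      ⟨fun h => (((ha.aeEq Q).symm.le.trans h)).trans (hb.aeEq Q).le,
       fun h => (((ha.aeEq Q).le.trans h)).trans (hb.aeEq Q).symm.le⟩)

def L0c.add {𝔓 : Set (Measure Ω)} : L0c 𝔓 → L0c 𝔓 → L0c 𝔓 :=
  Quotient.map₂ (fun x y ω => x ω + y ω)
    (fun _ _ ha _ _ hb P hP => by filter_upwards [ha P hP, hb P hP] with ω h1 h2; simp [h1, h2])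

def L0c.const (𝔓 : Set (Measure Ω)) (m : ℝ) : L0c 𝔓 := Quotient.mk (qsSetoid 𝔓) (fun _ => m)

def L0c.smul {𝔓 : Set (Measure Ω)} (c : ℝ) : L0c 𝔓 → L0c 𝔓 :=
  Quotient.map (fun x ω => c * x ω)
    (fun _ _ ha P hP => by filter_upwards [ha P hP] with ω h1; simp [h1])

def L0c.abs {𝔓 : Set (Measure Ω)} : L0c 𝔓 → L0c 𝔓 :=
  Quotient.map (fun x ω => |x ω|)
    (fun _ _ ha P hP => by filter_upwards [ha P hP] with ω h1; simp [h1])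

/-- Multiplication by the indicator of a set `A`. -/
noncomputable def L0c.mulInd {𝔓 : Set (Measure Ω)} (A : Set Ω) : L0c 𝔓 → L0c 𝔓 :=
  Quotient.map (fun x => A.indicator x)
    (fun _ _ ha P hP => by
      filter_upwards [ha P hP] with ω h1
      by_cases h : ω ∈ A <;> simp [Set.indicator, h, h1])

/-- The class of the indicator function of `A`. -/
noncomputable def L0c.ind (𝔓 : Set (Measure Ω)) (A : Set Ω) : L0c 𝔓 :=
  Quotient.mk (qsSetoid 𝔓) (A.indicator fun _ => (1 : ℝ))

/-- The bounded elements: `L^∞_c`. -/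
def Linftyc (𝔓 : Set (Measure Ω)) : Set (L0c 𝔓) :=
  {X | ∃ m : ℝ, 0 < m ∧ qsLe X.abs (L0c.const 𝔓 m)}

/-- Expectation under `R ∈ 𝔓_c(Ω)`. -/
noncomputable def expct {𝔓 : Set (Measure Ω)} (R : PcM 𝔓) : L0c 𝔓 → ℝ :=
  Quotient.lift (fun x => ∫ ω, x ω ∂(R.1))
    (fun _ _ h => integral_congr_ae (h.aeEq R))

/-- `𝒬` is a reduction set for `𝒞 ⊆ 𝒳`. -/
def IsReductionSet (𝔓 : Set (Measure Ω)) (𝒳 𝒞 : Set (L0c 𝔓)) (𝒬 : Set (PcM 𝔓)) : Prop :=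
  𝒬.Nonempty ∧ ∀ X ∈ 𝒳, (X ∈ 𝒞 ↔ ∀ Q ∈ 𝒬, jQ Q X ∈ jQ Q '' 𝒞)

/-- `𝒞 ⊆ 𝒳` is `𝔓`-sensitive. -/
def PSensitive (𝔓 : Set (Measure Ω)) (𝒳 𝒞 : Set (L0c 𝔓)) : Prop :=
  𝒞 = ∅ ∨ ∀ X ∈ 𝒳, (X ∈ 𝒞 ↔ ∀ Q : PcM 𝔓, jQ Q X ∈ jQ Q '' 𝒞)

theorem sup_of_consistent_family_lower_pSensitive {Ω : Type*} [MeasurableSpace Ω]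
    (𝔓 : Set (Measure Ω)) (h𝔓 : 𝔓.Nonempty) (hprob : ∀ P ∈ 𝔓, IsProbabilityMeasure P)
    (𝒳 : Set (L0c 𝔓)) (h𝒳 : 𝒳.Nonempty)
    (𝒬 : Set (PcM 𝔓)) (h𝒬 : 𝒬.Nonempty)
    (f : PcM 𝔓 → L0c 𝔓 → EReal)
    (hcons : ∀ Q ∈ 𝒬, ∀ X ∈ 𝒳, ∀ Y ∈ 𝒳, jQ Q X = jQ Q Y → f Q X = f Q Y) :
    ∀ r : ℝ,
      PSensitive 𝔓 𝒳 {X | X ∈ 𝒳 ∧ (⨆ Q ∈ 𝒬, f Q X) ≤ (r : EReal)} ∧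
      IsReductionSet 𝔓 𝒳 {X | X ∈ 𝒳 ∧ (⨆ Q ∈ 𝒬, f Q X) ≤ (r : EReal)} 𝒬 := by
  intro r
  have key : ∀ X ∈ 𝒳, (∀ Q ∈ 𝒬, jQ Q X ∈ jQ Q '' {X | X ∈ 𝒳 ∧ (⨆ Q ∈ 𝒬, f Q X) ≤ (r : EReal)}) →
      X ∈ {X | X ∈ 𝒳 ∧ (⨆ Q ∈ 𝒬, f Q X) ≤ (r : EReal)} := by
    intro X hX h
    refine ⟨hX, ?_⟩
    rw [iSup₂_le_iff]
    intro Q hQ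
    obtain ⟨Y, ⟨hY𝒳, hYr⟩, hjy⟩ := h Q hQ
    rw [hcons Q hQ X hX Y hY𝒳 hjy.symm]
    exact le_trans (le_iSup₂ (f := fun Q _ => f Q Y) Q hQ) hYr
  constructor
  · right
    intro X hX
    exact ⟨fun hC Q => ⟨X, hC, rfl⟩, fun h => key X hX fun Q _ => h Q⟩
  · exact ⟨h𝒬, fun X hX => ⟨fun hC Q hQ => ⟨X, hC, rfl⟩, key X hX⟩⟩
end

section
/- Suppose {𝟙_A : A ∈ ℱ} ⊆ 𝒳. Then every subset of 𝒳 is 𝒫-sensitive if and only if 𝒫 is dominated, i.e., there exists a probability measure Q on (Ω,ℱ) such that every Q-null set is 𝒫-polar (𝒫 ≪ Q). -/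
open MeasureTheory Filter Set

variable {Ω : Type*} [MeasurableSpace Ω]

open scoped ENNReal in
lemma exists_dominating_in_Pc {Ω : Type*} [MeasurableSpace Ω] (𝔓 : Set (Measure Ω))
    (h𝔓 : 𝔓.Nonempty) (hprob : ∀ P ∈ 𝔓, IsProbabilityMeasure P)
    (Q : Measure Ω) (hQ : IsProbabilityMeasure Q)
    (hdom : ∀ N : Set Ω, MeasurableSet N → Q N = 0 → ∀ P ∈ 𝔓, P N = 0) :
    ∃ R : Measure Ω, R ∈ Pc 𝔓 ∧ ∀ D : Set Ω, R D = 0 → ∀ P ∈ 𝔓, P D = 0 := by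
  classical
  set Pol : Set (Set Ω) := {N | ∀ P ∈ 𝔓, P N = 0} with hPol
  set S : Set ℝ≥0∞ := (fun N => Q N) '' Pol with hS
  have hSne : S.Nonempty := ⟨Q ∅, ∅, fun P _ => measure_empty, rfl⟩
  set α : ℝ≥0∞ := sSup S with hα
  have hα1 : α ≤ 1 := sSup_le (by rintro a ⟨N, _, rfl⟩; exact prob_le_one)
  have hαtop : α ≠ ∞ := (hα1.trans_lt (by norm_num)).ne
  obtain ⟨u, hu_mono, hu_tendsto, hu_mem⟩ := exists_seq_tendsto_sSup hSne (OrderTop.bddAbove S)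
  choose N hNpol hNQ using hu_mem
  set Nstar := ⋃ n, N n with hNstar
  have hNstar_pol : Nstar ∈ Pol := fun P hP => measure_iUnion_null (fun n => hNpol n P hP)
  have hQN_le : Q Nstar ≤ α := le_sSup ⟨Nstar, hNstar_pol, rfl⟩
  have hQN_ge : α ≤ Q Nstar := by
    refine le_of_tendsto hu_tendsto (Filter.Eventually.of_forall fun n => ?_)
    rw [← hNQ n]; exact measure_mono (subset_iUnion N n)
  have hQNstar : Q Nstar = α := le_antisymm hQN_le hQN_ge
  set M := toMeasurable Q Nstar with hM
  have hMmeas : MeasurableSet M := measurableSet_toMeasurable Q Nstar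
  have hQM : Q M = α := by rw [hM, measure_toMeasurable]; exact hQNstar
  have hsub : Nstar ⊆ M := subset_toMeasurable Q Nstar
  -- key estimate
  have keyGen : ∀ s t : Set Ω, MeasurableSet t → Nstar ⊆ s → Nstar ⊆ t → Q s ≤ α →
      Q (s \ t) = 0 := by
    intro s t ht hss hst hQs
    have h1 : α ≤ Q (s ∩ t) := hQNstar ▸ measure_mono (Set.subset_inter hss hst)
    have h2 : Q (s ∩ t) + Q (s \ t) = Q s := measure_inter_add_diff s ht
    have h3 : α + Q (s \ t) ≤ α + 0 := by
      rw [add_zero]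
      calc α + Q (s \ t) ≤ Q (s ∩ t) + Q (s \ t) := add_le_add_left h1 _
        _ = Q s := h2
        _ ≤ α := hQs
    exact le_antisymm (ENNReal.le_of_add_le_add_left hαtop h3) zero_le
  -- every P vanishes on M
  have hPM : ∀ P ∈ 𝔓, P M = 0 := by
    intro P hP
    set A := toMeasurable P Nstar with hA
    have hAmeas : MeasurableSet A := measurableSet_toMeasurable P Nstar
    have hPA : P A = 0 := by rw [hA, measure_toMeasurable]; exact hNstar_pol P hP
    have hQMA : Q (M \ (M ∩ A)) = 0 := by
      refine keyGen M (M ∩ A) (hMmeas.inter hAmeas) hsub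
        (Set.subset_inter hsub (subset_toMeasurable P Nstar)) hQM.le
    rw [Set.diff_self_inter] at hQMA
    have hpolar : ∀ P' ∈ 𝔓, P' (M \ A) = 0 := hdom _ (hMmeas.diff hAmeas) hQMA
    have : P M ≤ P A + P (M \ A) := by
      refine (measure_mono ?_).trans (measure_union_le _ _)
      intro x hx
      by_cases h : x ∈ A
      · exact Or.inl h
      · exact Or.inr ⟨hx, h⟩
    rw [hPA, hpolar P hP, add_zero] at this
    exact le_antisymm this zero_le
  -- polar sets have no mass outside M
  have hpolarM : ∀ Nn ∈ Pol, Q (Nn \ M) = 0 := by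
    intro Nn hNn
    have hunion : (Nn ∪ Nstar) ∈ Pol := fun P hP =>
      measure_union_null (hNn P hP) (hNstar_pol P hP)
    have hle : Q (Nn ∪ Nstar) ≤ α := le_sSup ⟨Nn ∪ Nstar, hunion, rfl⟩
    have := keyGen (Nn ∪ Nstar) M hMmeas Set.subset_union_right hsub hle
    exact measure_mono_null (Set.diff_subset_diff_left Set.subset_union_left) this
  -- Q Mᶜ ≠ 0
  have hQMc : Q Mᶜ ≠ 0 := by
    intro h0
    obtain ⟨P, hP⟩ := h𝔓
    have hPc : P Mᶜ = 0 := hdom Mᶜ hMmeas.compl h0 P hP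
    have hPu : P Set.univ = 0 := by
      have h1 : P Set.univ ≤ P M + P Mᶜ := by
        refine (measure_mono ?_).trans (measure_union_le _ _)
        intro x _; by_cases h : x ∈ M
        · exact Or.inl h
        · exact Or.inr h
      rw [hPM P hP, hPc, add_zero] at h1
      exact le_antisymm h1 zero_le
    haveI := hprob P hP
    rw [measure_univ] at hPu
    exact one_ne_zero hPu
  haveI := hQ
  have hQMc_top : Q Mᶜ ≠ ∞ := measure_ne_top Q Mᶜ
  set R : Measure Ω := (Q Mᶜ)⁻¹ • Q.restrict Mᶜ with hR
  have hRapp : ∀ D : Set Ω, R D = (Q Mᶜ)⁻¹ * Q (D ∩ Mᶜ) := by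
    intro D
    rw [hR, Measure.smul_apply, Measure.restrict_apply' hMmeas.compl, smul_eq_mul]
  refine ⟨R, ⟨⟨?_⟩, ?_⟩, ?_⟩
  · rw [hRapp, Set.univ_inter]
    exact ENNReal.inv_mul_cancel hQMc hQMc_top
  · intro Nn hNn
    rw [hRapp]
    have : Q (Nn ∩ Mᶜ) = 0 := by
      have : Nn ∩ Mᶜ = Nn \ M := rfl
      rw [this]; exact hpolarM Nn hNn
    rw [this, mul_zero]
  · intro D hD P hP
    rw [hRapp] at hD
    have hQD : Q (D ∩ Mᶜ) = 0 := by
      rcases mul_eq_zero.mp hD with h | h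
      · exact absurd h (ENNReal.inv_ne_zero.mpr hQMc_top)
      · exact h
    set B := toMeasurable Q (D ∩ Mᶜ) with hB
    have hBmeas : MeasurableSet B := measurableSet_toMeasurable Q (D ∩ Mᶜ)
    have hQB : Q B = 0 := by rw [hB, measure_toMeasurable]; exact hQD
    have hPB : P B = 0 := hdom B hBmeas hQB P hP
    have hPDM : P (D ∩ Mᶜ) = 0 := measure_mono_null (subset_toMeasurable Q _) hPB
    have : P D ≤ P (D ∩ Mᶜ) + P M := by
      refine (measure_mono ?_).trans (measure_union_le _ _)
      intro x hx
      by_cases h : x ∈ M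
      · exact Or.inr h
      · exact Or.inl ⟨hx, h⟩
    rw [hPDM, hPM P hP, add_zero] at this
    exact le_antisymm this zero_le

theorem all_sets_pSensitive_iff_dominated {Ω : Type*} [MeasurableSpace Ω]
    (𝔓 : Set (Measure Ω)) (h𝔓 : 𝔓.Nonempty) (hprob : ∀ P ∈ 𝔓, IsProbabilityMeasure P)
    (𝒳 : Set (L0c 𝔓)) (hind : ∀ A : Set Ω, MeasurableSet A → L0c.ind 𝔓 A ∈ 𝒳) :
    (∀ 𝒞 : Set (L0c 𝔓), 𝒞 ⊆ 𝒳 → PSensitive 𝔓 𝒳 𝒞) ↔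
      ∃ Q : Measure Ω, IsProbabilityMeasure Q ∧
        ∀ N : Set Ω, MeasurableSet N → Q N = 0 → ∀ P ∈ 𝔓, P N = 0 := by
  constructor
  · intro H
    classical
    obtain ⟨P₀, hP₀⟩ := h𝔓
    haveI := hprob P₀ hP₀
    set X : L0c 𝔓 := L0c.ind 𝔓 Set.univ with hX
    set 𝒞 : Set (L0c 𝔓) :=
      {Y | (∃ A, MeasurableSet A ∧ Y = L0c.ind 𝔓 A) ∧ Y ≠ X} with h𝒞
    have h𝒞sub : 𝒞 ⊆ 𝒳 := by rintro Y ⟨⟨A, hA, rfl⟩, -⟩; exact hind A hA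
    have hXmem : X ∈ 𝒳 := hind _ MeasurableSet.univ
    have hXnot : X ∉ 𝒞 := fun h => h.2 rfl
    have hne : L0c.ind 𝔓 ∅ ∈ 𝒞 := by
      refine ⟨⟨∅, MeasurableSet.empty, rfl⟩, ?_⟩
      intro h
      have h' : QSEq 𝔓 (Set.indicator ∅ fun _ => (1 : ℝ))
          (Set.indicator Set.univ fun _ => (1 : ℝ)) := Quotient.exact h
      have h2 := h' P₀ hP₀
      rw [EventuallyEq, ae_iff] at h2
      have hset : {a : Ω | ¬ Set.indicator ∅ (fun _ => (1 : ℝ)) a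
          = Set.indicator Set.univ (fun _ => (1 : ℝ)) a} = Set.univ := by
        ext a; simp
      rw [hset, measure_univ] at h2
      exact one_ne_zero h2
    rcases H 𝒞 h𝒞sub with hemp | hsens
    · exact absurd hemp (Set.nonempty_iff_ne_empty.mp ⟨_, hne⟩)
    · have hnall : ¬ ∀ Q : PcM 𝔓, jQ Q X ∈ jQ Q '' 𝒞 :=
        fun h => hXnot ((hsens X hXmem).mpr h)
      push_neg at hnall
      obtain ⟨Q, hQ⟩ := hnall
      refine ⟨Q.1, Q.2.1, ?_⟩
      intro Nn hNmeas hQN P hP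
      by_cases hcase : L0c.ind 𝔓 Nnᶜ = X
      · have h' : QSEq 𝔓 (Set.indicator Nnᶜ fun _ => (1 : ℝ))
            (Set.indicator Set.univ fun _ => (1 : ℝ)) := Quotient.exact hcase
        have h2 := h' P hP
        rw [EventuallyEq, ae_iff] at h2
        have hset : {a : Ω | ¬ Set.indicator Nnᶜ (fun _ => (1 : ℝ)) a
            = Set.indicator Set.univ (fun _ => (1 : ℝ)) a} = Nn := by
          ext a; by_cases h : a ∈ Nn <;> simp [Set.indicator, h]
        rwa [hset] at h2
      · exfalso
        apply hQ
        refine ⟨L0c.ind 𝔓 Nnᶜ, ⟨⟨Nnᶜ, hNmeas.compl, rfl⟩, hcase⟩, ?_⟩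
        apply Quotient.sound
        show Set.indicator Nnᶜ _ =ᵐ[Q.1] Set.indicator Set.univ _
        rw [EventuallyEq, ae_iff]
        refine measure_mono_null ?_ hQN
        intro a ha
        by_contra hmem
        apply ha
        simp [Set.indicator, hmem]
  · rintro ⟨Q, hQprob, hdom⟩
    obtain ⟨R, hRPc, hRdom⟩ := exists_dominating_in_Pc 𝔓 h𝔓 hprob Q hQprob hdom
    intro 𝒞 h𝒞sub
    rcases eq_or_ne 𝒞 ∅ with h | h
    · exact Or.inl h
    · refine Or.inr fun X hX => ⟨fun hXC Q' => ⟨X, hXC, rfl⟩, fun hall => ?_⟩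
      obtain ⟨Y, hY𝒞, hYX⟩ := hall ⟨R, hRPc⟩
      have hinj : ∀ a b : L0c 𝔓,
          jQ (⟨R, hRPc⟩ : PcM 𝔓) a = jQ (⟨R, hRPc⟩ : PcM 𝔓) b → a = b := by
        intro a b
        refine Quotient.inductionOn₂ a b fun x y hxy => ?_
        refine Quotient.sound fun P hP => ?_
        have h' : x =ᵐ[R] y := Quotient.exact hxy
        rw [EventuallyEq, ae_iff] at h' ⊢
        exact hRdom _ h' P hP
      have := hinj Y X hYX
      rwa [← this]
end

section
/- For any one-period market model S of dimension d over (Ω,ℱ) satisfying the robust no-arbitrage condition NA(𝒫,S), there exists a probability measure P in the convex hull of 𝒫 such that NA(P,S) holds. -/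
open MeasureTheory Filter Set

variable {Ω : Type*} [MeasurableSpace Ω]

/-- A one-period market model of dimension `d`: initial prices `S0 ∈ ℝ^d` and a
bounded, measurable, nonnegative terminal price vector `S1`. -/
structure MarketModel (Ω : Type*) [MeasurableSpace Ω] (d : ℕ) where
  S0 : Fin d → ℝ
  S1 : Ω → Fin d → ℝ
  meas : Measurable S1
  bdd : ∃ M : ℝ, ∀ ω i, |S1 ω i| ≤ M
  nonneg0 : ∀ i, 0 ≤ S0 i
  nonneg1 : ∀ ω i, 0 ≤ S1 ω i

/-- The gain `H ΔS = ∑ i, H i (S1 i − S0 i)` of a strategy `H ∈ ℝ^d`. -/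
def payoff {Ω : Type*} [MeasurableSpace Ω] {d : ℕ} (S : MarketModel Ω d)
    (H : Fin d → ℝ) (ω : Ω) : ℝ :=
  ∑ i, H i * (S.S1 ω i - S.S0 i)

/-- The class `[H ΔS]_c` in `L⁰_c`. -/
def payoffC {Ω : Type*} [MeasurableSpace Ω] (𝔓 : Set (Measure Ω)) {d : ℕ}
    (S : MarketModel Ω d) (H : Fin d → ℝ) : L0c 𝔓 :=
  Quotient.mk (qsSetoid 𝔓) (payoff S H)

/-- The robust no-arbitrage condition `NA(𝔓, S)`. -/
def NArob {Ω : Type*} [MeasurableSpace Ω] (𝔓 : Set (Measure Ω)) {d : ℕ}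
    (S : MarketModel Ω d) : Prop :=
  ∀ H : Fin d → ℝ, (∀ P ∈ 𝔓, ∀ᵐ ω ∂P, 0 ≤ payoff S H ω) →
    ∀ P ∈ 𝔓, ∀ᵐ ω ∂P, payoff S H ω = 0

/-- The no-arbitrage condition `NA(P, S)` under a single probability `P`. -/
def NAone {Ω : Type*} [MeasurableSpace Ω] (P : Measure Ω) {d : ℕ}
    (S : MarketModel Ω d) : Prop :=
  ∀ H : Fin d → ℝ, (∀ᵐ ω ∂P, 0 ≤ payoff S H ω) → ∀ᵐ ω ∂P, payoff S H ω = 0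

/-- The `𝔓`-superhedging functional, valued in `[-∞,∞]`. -/
noncomputable def piE {Ω : Type*} [MeasurableSpace Ω] (𝔓 : Set (Measure Ω)) {d : ℕ}
    (S : MarketModel Ω d) (X : L0c 𝔓) : EReal :=
  sInf ((fun r : ℝ => (r : EReal)) ''
    {r : ℝ | ∃ H : Fin d → ℝ, qsLe X ((L0c.const 𝔓 r).add (payoffC 𝔓 S H))})

section NAAux

variable {d : ℕ}

lemma payoff_measurable (S : MarketModel Ω d) (H : Fin d → ℝ) :
    Measurable (payoff S H) := by
  unfold payoff
  exact Finset.measurable_sum _ fun i _ =>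
    measurable_const.mul (((measurable_pi_apply i).comp S.meas).sub measurable_const)

lemma payoff_add' (S : MarketModel Ω d) (H K : Fin d → ℝ) (ω : Ω) :
    payoff S (H + K) ω = payoff S H ω + payoff S K ω := by
  unfold payoff
  rw [← Finset.sum_add_distrib]
  exact Finset.sum_congr rfl fun i _ => by simp [add_mul]

lemma payoff_smul' (S : MarketModel Ω d) (c : ℝ) (H : Fin d → ℝ) (ω : Ω) :
    payoff S (c • H) ω = c * payoff S H ω := by
  unfold payoff
  rw [Finset.mul_sum]
  exact Finset.sum_congr rfl fun i _ => by simp [mul_assoc]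

/-- The subspace of strategies with `P`-a.s. zero payoff. -/
def Zsub (S : MarketModel Ω d) (P : Measure Ω) : Submodule ℝ (Fin d → ℝ) where
  carrier := {H | ∀ᵐ ω ∂P, payoff S H ω = 0}
  add_mem' := by
    intro a b ha hb
    show ∀ᵐ ω ∂P, payoff S (a + b) ω = 0
    filter_upwards [ha, hb] with ω h1 h2
    rw [payoff_add', h1, h2, add_zero]
  zero_mem' := by
    refine ae_of_all _ fun ω => ?_
    simp [payoff]
  smul_mem' := by
    intro c a ha
    show ∀ᵐ ω ∂P, payoff S (c • a) ω = 0
    filter_upwards [ha] with ω h1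
    rw [payoff_smul', h1, mul_zero]

lemma mem_Zsub_iff (S : MarketModel Ω d) (P : Measure Ω) (H : Fin d → ℝ) :
    H ∈ Zsub S P ↔ ∀ᵐ ω ∂P, payoff S H ω = 0 := Iff.rfl

/-- The cone of strategies with `P`-a.s. nonnegative payoff. -/
def Cset (S : MarketModel Ω d) (P : Measure Ω) : Set (Fin d → ℝ) :=
  {H | ∀ᵐ ω ∂P, 0 ≤ payoff S H ω}

lemma isClosed_Cset (S : MarketModel Ω d) (P : Measure Ω) : IsClosed (Cset S P) := by
  refine IsSeqClosed.isClosed ?_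
  intro H L hH hHL
  have hall : ∀ᵐ ω ∂P, ∀ n, 0 ≤ payoff S (H n) ω := ae_all_iff.2 hH
  filter_upwards [hall] with ω hω
  have htd : Filter.Tendsto (fun n => payoff S (H n) ω) atTop (nhds (payoff S L ω)) := by
    unfold payoff
    refine tendsto_finset_sum _ fun i _ => ?_
    exact (((continuous_apply i).tendsto L).comp hHL).mul tendsto_const_nhds
  exact ge_of_tendsto' htd hω

end NAAux

theorem NA_convex_combination {Ω : Type*} [MeasurableSpace Ω]
    (𝔓 : Set (Measure Ω)) (h𝔓 : 𝔓.Nonempty) (hprob : ∀ P ∈ 𝔓, IsProbabilityMeasure P)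
    (d : ℕ) (S : MarketModel Ω d) (hNA : NArob 𝔓 S) :
    ∃ (n : ℕ) (w : Fin n → ENNReal) (Ps : Fin n → Measure Ω),
      (∀ i, Ps i ∈ 𝔓) ∧ (∑ i, w i) = 1 ∧ NAone (∑ i, w i • Ps i) S := by
  classical
  -- Index type: measures in 𝔓
  set ι := {P : Measure Ω // P ∈ 𝔓} with hι
  -- Z of a finite set of measures
  let Z : Finset ι → Submodule ℝ (Fin d → ℝ) := fun T => ⨅ P ∈ T, Zsub S P.1
  have memZ : ∀ (T : Finset ι) (H : Fin d → ℝ), H ∈ Z T ↔ ∀ P ∈ T, H ∈ Zsub S P.1 := by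
    intro T H
    simp [Z, Submodule.mem_iInf]
  have Zanti : ∀ {T T' : Finset ι}, T ⊆ T' → Z T' ≤ Z T := by
    intro T T' hTT H hH
    rw [memZ] at hH ⊢
    exact fun P hP => hH P (hTT hP)
  -- choose a minimizer of finrank over finite sets
  let ranks : Set ℕ := {n | ∃ T : Finset ι, Module.finrank ℝ (Z T) = n}
  have hranks : ranks.Nonempty := ⟨_, ∅, rfl⟩
  obtain ⟨T₀, hT₀⟩ : sInf ranks ∈ ranks := Nat.sInf_mem hranks
  have hmin : ∀ T : Finset ι, Module.finrank ℝ (Z T₀) ≤ Module.finrank ℝ (Z T) := by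
    intro T
    rw [hT₀]
    exact Nat.sInf_le ⟨T, rfl⟩
  -- key: Z T₀ is contained in every Zsub S P
  have hZall : ∀ P : ι, Z T₀ ≤ Zsub S P.1 := by
    intro P
    have h1 : Z (insert P T₀) = Z T₀ :=
      Submodule.eq_of_le_of_finrank_le (Zanti (Finset.subset_insert P T₀))
        (hmin (insert P T₀))
    intro H hH
    rw [← h1, memZ] at hH
    exact hH P (Finset.mem_insert_self P T₀)
  -- complement of Z T₀
  obtain ⟨W, hW⟩ := Submodule.exists_isCompl (Z T₀)
  -- cones
  let C : Finset ι → Set (Fin d → ℝ) := fun T => ⋂ P ∈ T, Cset S P.1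
  have memC : ∀ (T : Finset ι) (H : Fin d → ℝ), H ∈ C T ↔ ∀ P ∈ T, H ∈ Cset S P.1 := by
    intro T H
    simp [C]
  have isClosedC : ∀ T : Finset ι, IsClosed (C T) :=
    fun T => isClosed_biInter fun P _ => isClosed_Cset S P.1
  -- main claim: some finite set T has C (T ∪ T₀) ⊆ Z T₀
  have main : ∃ T : Finset ι, ∀ H ∈ C (T ∪ T₀), H ∈ Z T₀ := by
    by_contra hcon
    push_neg at hcon
    -- the compact sets
    let D : Finset ι → Set (Fin d → ℝ) :=
      fun T => (C (T ∪ T₀) ∩ (W : Set (Fin d → ℝ))) ∩ Metric.sphere 0 1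
    have hDclosed : ∀ T, IsClosed (D T) :=
      fun T => (((isClosedC _).inter W.closed_of_finiteDimensional).inter
        Metric.isClosed_sphere)
    have hDcompact : ∀ T, IsCompact (D T) :=
      fun T => (isCompact_sphere (0 : Fin d → ℝ) 1).inter_left
        ((isClosedC _).inter W.closed_of_finiteDimensional)
    have hDne : ∀ T, (D T).Nonempty := by
      intro T
      obtain ⟨H, hHC, hHZ⟩ := hcon T
      -- decompose H = z + w
      have hTop : H ∈ Z T₀ ⊔ W := by rw [hW.sup_eq_top]; trivial
      obtain ⟨z, hz, w, hw, hzw⟩ := Submodule.mem_sup.1 hTop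
      have hwne : w ≠ 0 := by
        rintro rfl
        rw [add_zero] at hzw
        exact hHZ (hzw ▸ hz)
      -- w has the same payoff a.s. under every P ∈ 𝔓
      have hwC : ∀ P : ι, P ∈ T ∪ T₀ → w ∈ Cset S P.1 := by
        intro P hP
        have hz0 : ∀ᵐ ω ∂P.1, payoff S z ω = 0 := hZall P hz
        have hH0 : ∀ᵐ ω ∂P.1, 0 ≤ payoff S H ω := (memC _ _).1 hHC P hP
        filter_upwards [hz0, hH0] with ω h1 h2
        have : payoff S H ω = payoff S z ω + payoff S w ω := by
          rw [← payoff_add', hzw]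
        rw [this, h1, zero_add] at h2
        exact h2
      refine ⟨‖w‖⁻¹ • w, ⟨?_, ?_⟩, ?_⟩
      · rw [memC]
        intro P hP
        have h2 := hwC P hP
        show ∀ᵐ ω ∂P.1, 0 ≤ payoff S (‖w‖⁻¹ • w) ω
        filter_upwards [h2] with ω h1
        rw [payoff_smul']
        positivity
      · exact W.smul_mem _ hw
      · rw [mem_sphere_zero_iff_norm]
        exact norm_smul_inv_norm (𝕜 := ℝ) hwne
    have hDdir : Directed (fun x1 x2 => x1 ⊇ x2) D := by
      intro T1 T2
      refine ⟨T1 ∪ T2, ?_, ?_⟩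
      · intro x hx
        refine ⟨⟨?_, hx.1.2⟩, hx.2⟩
        rw [memC]
        exact fun P hP => (memC _ _).1 hx.1.1 P
          (by simp only [Finset.mem_union] at hP ⊢; tauto)
      · intro x hx
        refine ⟨⟨?_, hx.1.2⟩, hx.2⟩
        rw [memC]
        exact fun P hP => (memC _ _).1 hx.1.1 P
          (by simp only [Finset.mem_union] at hP ⊢; tauto)
    obtain ⟨u, hu⟩ := IsCompact.nonempty_iInter_of_directed_nonempty_isCompact_isClosed
      D hDdir hDne hDcompact hDclosed
    simp only [Set.mem_iInter] at hu
    -- u has nonnegative payoff q.s.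
    have huC : ∀ P ∈ 𝔓, ∀ᵐ ω ∂P, 0 ≤ payoff S u ω := by
      intro P hP
      have := (hu ({⟨P, hP⟩} : Finset ι)).1.1
      exact (memC _ _).1 this ⟨P, hP⟩ (by simp)
    have huZ : u ∈ Z T₀ := by
      rw [memZ]
      intro P _
      exact hNA u huC P.1 P.2
    have huW : u ∈ W := (hu ∅).1.2
    have : u = 0 := by
      have := hW.disjoint
      rw [Submodule.disjoint_def] at this
      exact this u huZ huW
    have hnorm : ‖u‖ = 1 := mem_sphere_zero_iff_norm.1 (hu ∅).2
    rw [this, norm_zero] at hnorm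
    exact zero_ne_one hnorm
  obtain ⟨T, hT⟩ := main
  obtain ⟨P₀, hP₀⟩ := h𝔓
  -- final finite set
  set F : Finset ι := insert ⟨P₀, hP₀⟩ (T ∪ T₀) with hF
  have hFne : F.Nonempty := ⟨_, Finset.mem_insert_self _ _⟩
  set n := F.card with hn
  have hn0 : n ≠ 0 := Finset.card_ne_zero_of_mem (Finset.mem_insert_self _ _)
  let e : Fin n ≃ {x // x ∈ F} := F.equivFin.symm
  refine ⟨n, fun _ => (n : ENNReal)⁻¹, fun i => ((e i : ι) : Measure Ω), fun i => (e i : ι).2,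
    ?_, ?_⟩
  · rw [Finset.sum_const, Finset.card_univ, Fintype.card_fin, nsmul_eq_mul]
    exact ENNReal.mul_inv_cancel (by exact_mod_cast hn0) (by simp)
  · -- NAone
    intro H hH
    set μ := ∑ i : Fin n, (n : ENNReal)⁻¹ • (((e i : ι) : Measure Ω)) with hμ
    have hterm : ∀ (A : Set Ω), μ A = 0 → ∀ i : Fin n, ((e i : ι) : Measure Ω) A = 0 := by
      intro A hA i
      rw [hμ, Measure.finset_sum_apply] at hA
      have hi : (n : ENNReal)⁻¹ * ((e i : ι) : Measure Ω) A = 0 :=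
        (Finset.sum_eq_zero_iff.1 hA) i (Finset.mem_univ i)
      rcases mul_eq_zero.1 hi with h | h
      · exact absurd h (by simp [hn0])
      · exact h
    have hsum0 : ∀ (A : Set Ω), (∀ i : Fin n, ((e i : ι) : Measure Ω) A = 0) → μ A = 0 := by
      intro A hA
      rw [hμ, Measure.finset_sum_apply]
      refine Finset.sum_eq_zero fun i _ => ?_
      rw [Measure.smul_apply, hA i, smul_zero]
    -- each component measure gives payoff ≥ 0 a.s.
    have hHC : ∀ i : Fin n, ∀ᵐ ω ∂((e i : ι) : Measure Ω), 0 ≤ payoff S H ω := by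
      intro i
      rw [ae_iff]
      refine hterm _ ?_ i
      rw [← ae_iff]
      exact hH
    -- hence H ∈ C F, hence H ∈ Z T₀
    have hHZ : H ∈ Z T₀ := by
      refine hT H ?_
      rw [memC]
      intro P hP
      have hPF : P ∈ F := Finset.mem_insert_of_mem hP
      have : P = (e (e.symm ⟨P, hPF⟩) : ι) := by simp
      rw [this]
      exact hHC (e.symm ⟨P, hPF⟩)
    -- payoff is 0 a.s. under each component
    have hz : ∀ i : Fin n, ∀ᵐ ω ∂((e i : ι) : Measure Ω), payoff S H ω = 0 :=
      fun i => hZall (e i : ι) hHZ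
    rw [ae_iff]
    refine hsum0 _ fun i => ?_
    rw [← ae_iff]
    exact hz i
end
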